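/- Let d ≥ 1 and ϑ ≥ 0. Define the Hermite semigroup operator R_ϑ on 𝒮(ℝ^d) by R_ϑ f(x) = cosh(ϑ)^{−d/2} ∫_{ℝ^d} 𝓕f(η) exp(−π tanh(ϑ)(|x|² + |η|²)) exp(2πi x·η / cosh(ϑ)) dη, and let g(t) = e^{−π|t|²}. Then for all z, w ∈ ℝ^{2d}, the modulus of the Gabor matrix of R_ϑ equals |⟨R_ϑ π(z)g, π(w)g⟩_{L²(ℝ^d)}| = 2^{−d/2} e^{−dϑ/2} exp(−(π/4)(1 + e^{−ϑ})|z − w|²) exp(−(π/4)(1 − e^{−ϑ})|z + w|²). Equivalently, |⟨R_ϑ π(z)g, π(w)g⟩| = 2^{−d/2} e^{−dϑ/2} exp(−(π/2)(|z|² + |w|²) + π e^{−ϑ} z·w). (R_ϑ with ϑ = 2t is the propagator e^{t((1/(2π))Δ − 2π|x|²)} of the Hermite heat equation; for ϑ = 0 this reduces to the Gaussian overlap formula.) -/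

import Mathlib

open MeasureTheory Complex
open scoped Real

noncomputable section

variable {d : ℕ}

/-- Fourier transform `𝓕f(ξ) = ∫ f(x) e^{−2πi x·ξ} dx`. -/
def fourierTf (f : EuclideanSpace ℝ (Fin d) → ℂ) (ξ : EuclideanSpace ℝ (Fin d)) : ℂ :=
  ∫ x, f x * Complex.exp (-(2 * π * (inner ℝ x ξ : ℝ)) * Complex.I)

/-- The Hermite semigroup operator
`R_ϑ f(x) = cosh(ϑ)^{−d/2} ∫ 𝓕f(η) e^{−π tanh(ϑ)(|x|²+|η|²)} e^{2πi x·η/cosh(ϑ)} dη`. -/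
def hermiteSemigroup (ϑ : ℝ) (f : EuclideanSpace ℝ (Fin d) → ℂ)
    (x : EuclideanSpace ℝ (Fin d)) : ℂ :=
  ((Real.cosh ϑ ^ (-(d : ℝ) / 2) : ℝ) : ℂ) *
    ∫ η, fourierTf f η *
      Complex.exp (-(π * Real.tanh ϑ * (‖x‖ ^ 2 + ‖η‖ ^ 2) : ℝ)) *
      Complex.exp ((2 * π * (inner ℝ x η : ℝ) / Real.cosh ϑ) * Complex.I)

/-- Time–frequency shift `π(z)f(t) = e^{2πi z₂·t} f(t − z₁)`. -/
def tfShift (z : EuclideanSpace ℝ (Fin d) × EuclideanSpace ℝ (Fin d))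
    (f : EuclideanSpace ℝ (Fin d) → ℂ) (t : EuclideanSpace ℝ (Fin d)) : ℂ :=
  Complex.exp ((2 * π * (inner ℝ z.2 t : ℝ)) * Complex.I) * f (t - z.1)

/-- Gaussian window `g(t) = e^{−π|t|²}`. -/
def gaussWin (t : EuclideanSpace ℝ (Fin d)) : ℂ :=
  (Real.exp (-π * ‖t‖ ^ 2) : ℝ)

lemma sq_mix (x y : ℝ) : ((x:ℂ) + y*I)^2 = ((x^2 - y^2 : ℝ):ℂ) + ((2*x*y : ℝ):ℂ)*I := by
  push_cast
  ring_nf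
  rw [Complex.I_sq]
  ring

lemma sum_mix (a b : Fin d → ℝ) :
    (∑ i, (((a i : ℂ)) + (b i : ℂ)*I)) = ((∑ i, a i : ℝ) : ℂ) + ((∑ i, b i : ℝ) : ℂ) * I := by
  rw [Finset.sum_add_distrib, ← Finset.sum_mul]
  push_cast
  ring


lemma gauss_pi (b : ℂ) (hb : 0 < b.re) (c : Fin d → ℂ) :
    ∫ v : EuclideanSpace ℝ (Fin d), Complex.exp (-b * ‖v‖^2 + ∑ i, c i * v i)
      = (π/b) ^ ((d:ℂ)/2) * Complex.exp ((∑ i, c i^2) / (4*b)) := by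
  have h := (EuclideanSpace.volume_preserving_symm_measurableEquiv_toLp (Fin d)).symm
  rw [← h.integral_comp (MeasurableEquiv.measurableEmbedding _)]
  have := GaussianFourier.integral_cexp_neg_mul_sum_add hb c
  simp only [Fintype.card_fin] at this
  rw [← this]
  congr 1 with v
  have h1 : ((‖(MeasurableEquiv.toLp 2 (Fin d → ℝ)).symm.symm v‖^2 : ℝ) : ℂ) = ∑ i, (v i : ℂ)^2 := by
    rw [EuclideanSpace.norm_eq, Real.sq_sqrt (Finset.sum_nonneg (fun i _ => by positivity))]
    push_cast
    simp [sq_abs]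
    simp_rw [← Complex.ofReal_pow, sq_abs]
  have h2 : ∀ i, (MeasurableEquiv.toLp 2 (Fin d → ℝ)).symm.symm v i = v i := fun i => rfl
  push_cast at h1
  congr 1
  rw [h1]
  simp only [h2]

lemma nsq (a : EuclideanSpace ℝ (Fin d)) : ‖a‖^2 = ∑ i, a i ^ 2 := by
  rw [EuclideanSpace.norm_eq, Real.sq_sqrt (Finset.sum_nonneg fun i _ => by positivity)]
  simp [sq_abs]

lemma inn (a b : EuclideanSpace ℝ (Fin d)) : (inner ℝ a b : ℝ) = ∑ i, a i * b i := by
  simp [PiLp.inner_apply, RCLike.inner_apply, mul_comm]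


lemma gauss_real (b : ℝ) (hb : 0 < b) (ca cb : Fin d → ℝ) (Ka Kb : ℝ) :
    ∫ v : EuclideanSpace ℝ (Fin d),
        Complex.exp (((-b*‖v‖^2 + ∑ i, ca i * v i + Ka : ℝ) : ℂ)
          + ((∑ i, cb i * v i + Kb : ℝ) : ℂ) * I)
      = (((π/b) ^ ((d:ℝ)/2) : ℝ) : ℂ) *
          Complex.exp ((((∑ i, ca i^2 - ∑ i, cb i^2)/(4*b) + Ka : ℝ) : ℂ)
            + (((∑ i, ca i * cb i)/(2*b) + Kb : ℝ) : ℂ) * I) := by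
  have hb' : (b:ℂ) ≠ 0 := by exact_mod_cast hb.ne'
  have key : ∀ v : EuclideanSpace ℝ (Fin d),
      (((-b*‖v‖^2 + ∑ i, ca i * v i + Ka : ℝ) : ℂ) + ((∑ i, cb i * v i + Kb : ℝ) : ℂ) * I)
      = (-(b:ℂ) * ‖v‖^2 + ∑ i, ((ca i : ℂ) + (cb i : ℂ)*I) * v i) + ((Ka:ℂ) + (Kb:ℂ)*I) := by
    intro v
    have : (∑ i, ((ca i : ℂ) + (cb i : ℂ)*I) * v i)
        = ((∑ i, ca i * v i : ℝ) : ℂ) + ((∑ i, cb i * v i : ℝ) : ℂ) * I := by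
      rw [← sum_mix (fun i => ca i * v i) (fun i => cb i * v i)]
      apply Finset.sum_congr rfl; intro i _; push_cast; ring
    rw [this]; push_cast; ring
  have key2 : ∀ v : EuclideanSpace ℝ (Fin d),
      Complex.exp (((-b*‖v‖^2 + ∑ i, ca i * v i + Ka : ℝ) : ℂ) + ((∑ i, cb i * v i + Kb : ℝ) : ℂ) * I)
      = Complex.exp (-(b:ℂ) * ‖v‖^2 + ∑ i, ((ca i : ℂ) + (cb i : ℂ)*I) * v i)
        * Complex.exp ((Ka:ℂ) + (Kb:ℂ)*I) := fun v => by rw [← Complex.exp_add, key v]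
  simp only [key2, integral_mul_const]
  rw [gauss_pi b (by exact_mod_cast hb) _]
  have hsq : (∑ i, ((ca i : ℂ) + (cb i : ℂ)*I)^2)
      = ((∑ i, (ca i^2 - cb i^2) : ℝ) : ℂ) + ((∑ i, 2 * ca i * cb i : ℝ) : ℂ) * I := by
    rw [← sum_mix]
    apply Finset.sum_congr rfl; intro i _; exact sq_mix _ _
  rw [hsq]
  have hpow : ((π:ℂ)/b) ^ ((d:ℂ)/2) = (((π/b) ^ ((d:ℝ)/2) : ℝ) : ℂ) := by
    rw [Complex.ofReal_cpow (by positivity)]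
    push_cast
    ring_nf
  rw [hpow, mul_assoc, ← Complex.exp_add]
  congr 2
  rw [Finset.sum_sub_distrib]
  have h2 : (∑ i, 2 * ca i * cb i : ℝ) = 2 * ∑ i, ca i * cb i := by
    rw [Finset.mul_sum]; apply Finset.sum_congr rfl; intros; ring
  rw [h2]
  push_cast
  field_simp
  ring

lemma reAux (P Q : ℝ) : (((P:ℝ):ℂ) + ((Q:ℝ):ℂ)*I).re = P := by simp


lemma step1 (z : EuclideanSpace ℝ (Fin d) × EuclideanSpace ℝ (Fin d))
    (η : EuclideanSpace ℝ (Fin d)) :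
    fourierTf (tfShift z gaussWin) η
      = Complex.exp (((∑ i, -π * (η i - z.2 i)^2 : ℝ) : ℂ)
          + ((∑ i, 2*π*(z.1 i * (z.2 i - η i)) : ℝ) : ℂ) * I) := by
  unfold fourierTf tfShift gaussWin
  have key : ∀ t : EuclideanSpace ℝ (Fin d),
      Complex.exp ((2 * π * (inner ℝ z.2 t : ℝ)) * I) * ((Real.exp (-π * ‖t - z.1‖ ^ 2) : ℝ) : ℂ)
        * Complex.exp (-(2 * π * (inner ℝ t η : ℝ)) * I)
      = Complex.exp (((-π*‖t‖^2 + ∑ i, (2*π*z.1 i) * t i + ∑ i, -π * z.1 i^2 : ℝ) : ℂ)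
          + ((∑ i, (2*π*(z.2 i - η i)) * t i + 0 : ℝ) : ℂ) * I) := by
    intro t
    rw [Complex.ofReal_exp, ← Complex.exp_add, ← Complex.exp_add]
    congr 1
    have hA : (-π * ‖t - z.1‖^2 : ℝ) = -π*‖t‖^2 + ∑ i, (2*π*z.1 i) * t i + ∑ i, -π * z.1 i^2 := by
      rw [nsq, nsq, Finset.mul_sum, Finset.mul_sum, ← Finset.sum_add_distrib,
        ← Finset.sum_add_distrib]
      exact Finset.sum_congr rfl fun i _ => by show -π * ((t i - z.1 i)^2) = _; ring
    have hB : (2 * π * (inner ℝ z.2 t : ℝ)) + (-(2 * π * (inner ℝ t η : ℝ)))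
        = ∑ i, (2*π*(z.2 i - η i)) * t i + 0 := by
      rw [inn, inn, Finset.mul_sum, Finset.mul_sum, ← Finset.sum_neg_distrib,
        ← Finset.sum_add_distrib, add_zero]
      exact Finset.sum_congr rfl fun i _ => by ring
    rw [← hA]
    push_cast [← hB]
    ring
  rw [MeasureTheory.integral_congr_ae (Filter.EventuallyEq.of_eq (funext key))]
  rw [gauss_real π Real.pi_pos (fun i => 2*π*z.1 i) (fun i => 2*π*(z.2 i - η i))
    (∑ i, -π * z.1 i^2) 0]
  rw [div_self Real.pi_ne_zero, Real.one_rpow]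
  have hA : ((∑ i, (2*π*z.1 i)^2 - ∑ i, (2*π*(z.2 i - η i))^2)/(4*π) + ∑ i, -π * z.1 i^2 : ℝ)
      = ∑ i, -π * (η i - z.2 i)^2 := by
    rw [← Finset.sum_sub_distrib, Finset.sum_div, ← Finset.sum_add_distrib]
    exact Finset.sum_congr rfl fun i _ => by field_simp; ring
  have hB : ((∑ i, (2*π*z.1 i) * (2*π*(z.2 i - η i)))/(2*π) + 0 : ℝ)
      = ∑ i, 2*π*(z.1 i * (z.2 i - η i)) := by
    rw [add_zero, Finset.sum_div]
    exact Finset.sum_congr rfl fun i _ => by field_simp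
  rw [hA, hB, Complex.ofReal_one, one_mul]

lemma step2 (ϑ : ℝ) (z : EuclideanSpace ℝ (Fin d) × EuclideanSpace ℝ (Fin d))
    (s : EuclideanSpace ℝ (Fin d)) :
    hermiteSemigroup ϑ (tfShift z gaussWin) s
      = ((Real.exp (-(d:ℝ)*ϑ/2) : ℝ) : ℂ) * Complex.exp (
          ((∑ i, -π * s i^2 + ∑ i, 2*π*Real.exp (-ϑ)*(s i * z.1 i)
            + ∑ i, (π*(Real.exp (-ϑ)*Real.cosh ϑ)*(z.2 i^2 - z.1 i^2) - π * z.2 i^2) : ℝ) : ℂ)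
          + ((∑ i, 2*π*Real.exp (-ϑ)*(z.2 i * s i)
            + ∑ i, 2*π*(1-Real.exp (-ϑ)*Real.cosh ϑ)*(z.1 i * z.2 i) : ℝ) : ℂ) * I) := by
  have hch : 0 < Real.cosh ϑ := Real.cosh_pos ϑ
  have hE : 0 < Real.exp ϑ := Real.exp_pos ϑ
  have h1τeq : 1 + Real.tanh ϑ = Real.exp ϑ / Real.cosh ϑ := by
    rw [Real.tanh_eq_sinh_div_cosh, ← Real.cosh_add_sinh ϑ]
    field_simp
  have h1τ : 0 < 1 + Real.tanh ϑ := by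
    rw [h1τeq]; positivity
  have hτ : Real.tanh ϑ = Real.sinh ϑ / Real.cosh ϑ := Real.tanh_eq_sinh_div_cosh ϑ
  have hcs : Real.cosh ϑ = (Real.exp ϑ + (Real.exp ϑ)⁻¹)/2 := by
    rw [Real.cosh_eq, Real.exp_neg]
  have hsh : Real.sinh ϑ = (Real.exp ϑ - (Real.exp ϑ)⁻¹)/2 := by
    rw [Real.sinh_eq, Real.exp_neg]
  have hu : Real.exp (-ϑ) = (Real.exp ϑ)⁻¹ := Real.exp_neg ϑ
  unfold hermiteSemigroup
  have key : ∀ η : EuclideanSpace ℝ (Fin d),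
      fourierTf (tfShift z gaussWin) η *
        Complex.exp (-((π * Real.tanh ϑ * (‖s‖ ^ 2 + ‖η‖ ^ 2) : ℝ) : ℂ)) *
        Complex.exp (2 * (π:ℂ) * ((inner ℝ s η : ℝ) : ℂ) / ((Real.cosh ϑ : ℝ) : ℂ) * I)
      = Complex.exp (((-(π*(1+Real.tanh ϑ))*‖η‖^2
            + ∑ i, (2*π*z.2 i) * η i
            + ∑ i, (-π*z.2 i^2 - π*Real.tanh ϑ*s i^2) : ℝ) : ℂ)
          + ((∑ i, (2*π*(s i/Real.cosh ϑ - z.1 i)) * η i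
            + ∑ i, 2*π*(z.1 i * z.2 i) : ℝ) : ℂ) * I) := by
    intro η
    rw [step1, ← Complex.exp_add, ← Complex.exp_add]
    have hA : (∑ i, -π * (η i - z.2 i)^2 : ℝ) + (-(π * Real.tanh ϑ * (‖s‖ ^ 2 + ‖η‖ ^ 2)))
        = -(π*(1+Real.tanh ϑ))*‖η‖^2 + ∑ i, (2*π*z.2 i) * η i
          + ∑ i, (-π*z.2 i^2 - π*Real.tanh ϑ*s i^2) := by
      rw [nsq s, nsq η]
      simp only [Finset.mul_sum, mul_add, neg_add, ← Finset.sum_add_distrib,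
        ← Finset.sum_neg_distrib, neg_mul]
      exact Finset.sum_congr rfl fun i _ => by ring
    have hB : (∑ i, 2*π*(z.1 i * (z.2 i - η i)) : ℝ) + 2 * π * (inner ℝ s η : ℝ) / Real.cosh ϑ
        = ∑ i, (2*π*(s i/Real.cosh ϑ - z.1 i)) * η i + ∑ i, 2*π*(z.1 i * z.2 i) := by
      rw [inn]
      simp only [Finset.mul_sum, mul_add, Finset.sum_div, ← Finset.sum_add_distrib]
      refine Finset.sum_congr rfl fun i _ => ?_
      field_simp
      ring
    rw [← hA, ← hB]
    congr 1
    rw [Complex.ext_iff]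
    constructor <;> (simp; try ring)
  simp only [key]
  rw [gauss_real (π*(1+Real.tanh ϑ)) (by positivity) (fun i => 2*π*z.2 i)
    (fun i => 2*π*(s i/Real.cosh ϑ - z.1 i))
    (∑ i, (-π*z.2 i^2 - π*Real.tanh ϑ*s i^2)) (∑ i, 2*π*(z.1 i * z.2 i))]
  rw [← mul_assoc]
  congr 1
  · -- prefactor
    rw [← Complex.ofReal_mul]
    congr 1
    have h1 : π/(π*(1+Real.tanh ϑ)) = (1+Real.tanh ϑ)⁻¹ := by
      field_simp
    rw [h1, Real.inv_rpow h1τ.le, ← Real.rpow_neg h1τ.le,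
      show (-(d:ℝ)/2) = -((d:ℝ)/2) by ring, ← Real.mul_rpow hch.le h1τ.le,
      h1τeq, mul_div_cancel₀ _ (ne_of_gt hch), ← Real.exp_mul]
    congr 1
    ring
  · -- exponent
    congr 2
    · -- A'
      rw [← Finset.sum_sub_distrib, Finset.sum_div, ← Finset.sum_add_distrib]
      simp only [← Finset.sum_add_distrib]
      refine congrArg _ (Finset.sum_congr rfl fun i _ => ?_)
      rw [hτ, hsh, hcs, hu]
      have h2 : Real.exp ϑ + (Real.exp ϑ)⁻¹ > 0 := by positivity
      field_simp
      ring
    · -- B'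
      rw [Finset.sum_div]
      simp only [← Finset.sum_add_distrib]
      congr 1
      refine congrArg _ (Finset.sum_congr rfl fun i _ => ?_)
      rw [hτ, hsh, hcs, hu]
      have h2 : Real.exp ϑ + (Real.exp ϑ)⁻¹ > 0 := by positivity
      field_simp
      ring

/-- **Modulus of the Gabor matrix of the Hermite semigroup.** For `ϑ ≥ 0` and all
`z, w ∈ ℝ^{2d}`:
`|⟨R_ϑ π(z)g, π(w)g⟩| = 2^{−d/2} e^{−dϑ/2}
  exp(−(π/4)(1+e^{−ϑ})|z−w|²) exp(−(π/4)(1−e^{−ϑ})|z+w|²)`,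
with `|z∓w|²` the squared Euclidean norm on `ℝ^{2d}`. -/
theorem gabor_matrix_hermite_semigroup
    (hd : 1 ≤ d) (ϑ : ℝ) (hϑ : 0 ≤ ϑ)
    (z w : EuclideanSpace ℝ (Fin d) × EuclideanSpace ℝ (Fin d)) :
    ‖∫ s, hermiteSemigroup ϑ (tfShift z gaussWin) s * (starRingEnd ℂ) (tfShift w gaussWin s)‖
      = (2 : ℝ) ^ (-(d : ℝ) / 2) * Real.exp (-(d : ℝ) * ϑ / 2) *
          Real.exp (-(π / 4) * (1 + Real.exp (-ϑ)) *
            (‖z.1 - w.1‖ ^ 2 + ‖z.2 - w.2‖ ^ 2)) *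
          Real.exp (-(π / 4) * (1 - Real.exp (-ϑ)) *
            (‖z.1 + w.1‖ ^ 2 + ‖z.2 + w.2‖ ^ 2)) := by
  have hu : Real.exp (-ϑ) = (Real.exp ϑ)⁻¹ := Real.exp_neg ϑ
  have hcs : Real.cosh ϑ = (Real.exp ϑ + (Real.exp ϑ)⁻¹)/2 := by
    rw [Real.cosh_eq, Real.exp_neg]
  have hE : (0:ℝ) < Real.exp ϑ := Real.exp_pos ϑ
  have hk : Real.exp (-ϑ) * Real.cosh ϑ = (1 + Real.exp (-ϑ)^2)/2 := by
    rw [hcs, hu]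
    field_simp
  -- pointwise rewriting of the integrand
  have key : ∀ s : EuclideanSpace ℝ (Fin d),
      hermiteSemigroup ϑ (tfShift z gaussWin) s * (starRingEnd ℂ) (tfShift w gaussWin s)
      = ((Real.exp (-(d:ℝ)*ϑ/2) : ℝ) : ℂ) * Complex.exp (
          ((-(2*π)*‖s‖^2 + ∑ i, (2*π*(w.1 i + Real.exp (-ϑ)*z.1 i)) * s i
            + ∑ i, (π*(Real.exp (-ϑ)*Real.cosh ϑ)*(z.2 i^2 - z.1 i^2) - π*z.2 i^2 - π*w.1 i^2) : ℝ) : ℂ)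
          + ((∑ i, (2*π*(Real.exp (-ϑ)*z.2 i - w.2 i)) * s i
            + ∑ i, 2*π*(1-Real.exp (-ϑ)*Real.cosh ϑ)*(z.1 i * z.2 i) : ℝ) : ℂ) * I) := by
    intro s
    rw [step2, tfShift, gaussWin, map_mul, mul_assoc]
    congr 1
    rw [← Complex.exp_conj]
    have hconj : (starRingEnd ℂ) ((2 * (π:ℂ) * ((inner ℝ w.2 s : ℝ):ℂ)) * I)
        = -((2 * π * (inner ℝ w.2 s : ℝ) : ℝ) : ℂ) * I := by
      rw [show (2*(π:ℂ)*((inner ℝ w.2 s : ℝ):ℂ))*I = ((2*π*(inner ℝ w.2 s : ℝ) : ℝ) : ℂ) * I by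
        push_cast; ring, map_mul, Complex.conj_ofReal, Complex.conj_I]
      ring
    rw [hconj, Complex.conj_ofReal, Complex.ofReal_exp, ← Complex.exp_add, ← Complex.exp_add]
    congr 1
    have hA : ((∑ i, -π * s i^2 + ∑ i, 2*π*Real.exp (-ϑ)*(s i * z.1 i)
          + ∑ i, (π*(Real.exp (-ϑ)*Real.cosh ϑ)*(z.2 i^2 - z.1 i^2) - π * z.2 i^2)) : ℝ)
          + (-π * ‖s - w.1‖^2)
        = -(2*π)*‖s‖^2 + ∑ i, (2*π*(w.1 i + Real.exp (-ϑ)*z.1 i)) * s i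
            + ∑ i, (π*(Real.exp (-ϑ)*Real.cosh ϑ)*(z.2 i^2 - z.1 i^2) - π*z.2 i^2 - π*w.1 i^2) := by
      rw [nsq s, nsq (s - w.1)]
      simp only [Finset.mul_sum, mul_add, neg_add, ← Finset.sum_add_distrib,
        ← Finset.sum_neg_distrib, neg_mul]
      refine Finset.sum_congr rfl fun i _ => ?_
      show _ + -(π * (s i - w.1 i)^2) = _
      ring
    have hB : ((∑ i, 2*π*Real.exp (-ϑ)*(z.2 i * s i) + ∑ i, 2*π*(1-Real.exp (-ϑ)*Real.cosh ϑ)*(z.1 i * z.2 i)) : ℝ)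
          + (-(2 * π * (inner ℝ w.2 s : ℝ)))
        = ∑ i, (2*π*(Real.exp (-ϑ)*z.2 i - w.2 i)) * s i + ∑ i, 2*π*(1-Real.exp (-ϑ)*Real.cosh ϑ)*(z.1 i * z.2 i) := by
      rw [inn]
      simp only [Finset.mul_sum, ← Finset.sum_add_distrib, ← Finset.sum_neg_distrib]
      exact Finset.sum_congr rfl fun i _ => by ring
    rw [← hA, ← hB]
    rw [Complex.ext_iff]
    constructor <;> (simp [-Complex.ofReal_exp]; try ring)
  simp only [key]
  rw [MeasureTheory.integral_const_mul]
  rw [gauss_real (2*π) (by positivity) (fun i => 2*π*(w.1 i + Real.exp (-ϑ)*z.1 i))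
    (fun i => 2*π*(Real.exp (-ϑ)*z.2 i - w.2 i))
    (∑ i, (π*(Real.exp (-ϑ)*Real.cosh ϑ)*(z.2 i^2 - z.1 i^2) - π*z.2 i^2 - π*w.1 i^2))
    (∑ i, 2*π*(1-Real.exp (-ϑ)*Real.cosh ϑ)*(z.1 i * z.2 i))]
  rw [norm_mul, norm_mul, Complex.norm_real, Complex.norm_real,
    Complex.norm_exp]
  rw [reAux]
  have hP : (∑ i, (2*π*(w.1 i + Real.exp (-ϑ)*z.1 i))^2 - ∑ i, (2*π*(Real.exp (-ϑ)*z.2 i - w.2 i))^2)/(4*(2*π))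
      + ∑ i, (π*(Real.exp (-ϑ)*Real.cosh ϑ)*(z.2 i^2 - z.1 i^2) - π*z.2 i^2 - π*w.1 i^2)
      = (-(π / 4) * (1 + Real.exp (-ϑ)) * (‖z.1 - w.1‖ ^ 2 + ‖z.2 - w.2‖ ^ 2))
        + (-(π / 4) * (1 - Real.exp (-ϑ)) * (‖z.1 + w.1‖ ^ 2 + ‖z.2 + w.2‖ ^ 2)) := by
    rw [hk, nsq (z.1 - w.1), nsq (z.2 - w.2), nsq (z.1 + w.1), nsq (z.2 + w.2)]
    rw [← Finset.sum_sub_distrib, Finset.sum_div, ← Finset.sum_add_distrib]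
    simp only [Finset.mul_sum, mul_add, neg_mul, ← Finset.sum_add_distrib,
      ← Finset.sum_neg_distrib]
    refine Finset.sum_congr rfl fun i _ => ?_
    have e1 : (z.1 - w.1) i = z.1 i - w.1 i := rfl
    have e2 : (z.2 - w.2) i = z.2 i - w.2 i := rfl
    have e3 : (z.1 + w.1) i = z.1 i + w.1 i := rfl
    have e4 : (z.2 + w.2) i = z.2 i + w.2 i := rfl
    rw [e1, e2, e3, e4]
    field_simp
    ring
  rw [hP, Real.exp_add]
  have hpow : (π/(2*π)) ^ ((d:ℝ)/2) = (2:ℝ) ^ (-(d:ℝ)/2) := by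
    rw [show π/(2*π) = ((2:ℝ))⁻¹ by field_simp,
      Real.inv_rpow (by norm_num : (0:ℝ) ≤ 2),
      ← Real.rpow_neg (by norm_num : (0:ℝ) ≤ 2)]
    congr 1
    ring
  rw [hpow, Real.norm_eq_abs, Real.norm_eq_abs, abs_of_pos (Real.exp_pos _),
    abs_of_pos (by positivity)]
  ring
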